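/- Let 0<q<1 and t>0. Let b_n:[0,∞)→ℝ, n≥0, be functions, each bounded on [0,t], such that ∑_{n=0}^∞ (1/[n]_q!)·∫_0^t b_n(s)²·s^n d_q s < ∞ (the inner integrals being Jackson q-integrals). Under the q-Brownian hypotheses on (B_s), the random variables S_N := ∑_{m=0}^N (1/[m+1]_q!)·∑_{k=0}^∞ b_m(q^k t)·(h_{m+1}(B_{q^k t}; q^k t) − h_{m+1}(B_{q^{k+1} t}; q^{k+1} t)) are well defined (the inner series converge a.s. and in L²(P)) and the sequence (S_N)_{N≥0} converges in L²(P) as N→∞. -/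

import Mathlib

open scoped Topology


open MeasureTheory Filter

/-- `[n]_q = 1 + q + ⋯ + q^{n-1}`. -/
noncomputable def qNat (q : ℝ) (n : ℕ) : ℝ := ∑ i ∈ Finset.range n, q ^ i

/-- `[n]_q! = [1]_q [2]_q ⋯ [n]_q`. -/
noncomputable def qFact (q : ℝ) (n : ℕ) : ℝ := ∏ i ∈ Finset.range n, qNat q (i + 1)

/-- Monic continuous q-Hermite polynomials: `h_0 = 1`, `h_1 = x`,
`x·h_n(x;t) = h_{n+1}(x;t) + t·[n]_q·h_{n−1}(x;t)`. -/
noncomputable def qH (q : ℝ) : ℕ → ℝ → ℝ → ℝ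
  | 0, _, _ => 1
  | 1, x, _ => x
  | (n + 2), x, t => x * qH q (n + 1) x t - t * qNat q (n + 1) * qH q n x t


noncomputable def qHc (q : ℝ) : ℕ → ℝ
  | 0 => 1
  | 1 => 2 / Real.sqrt (1 - q)
  | (n + 2) => (2 / Real.sqrt (1 - q)) * qHc q (n + 1) + (1 / (1 - q)) * qHc q n

variable {q : ℝ}

lemma qNat_nonneg (hq : 0 ≤ q) (n : ℕ) : 0 ≤ qNat q n :=
  Finset.sum_nonneg fun i _ => pow_nonneg hq i

lemma qNat_le (hq0 : 0 ≤ q) (hq1 : q < 1) (n : ℕ) : qNat q n ≤ 1 / (1 - q) := by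
  have h1 : (0:ℝ) < 1 - q := by linarith
  rw [qNat, geom_sum_eq (by linarith : q ≠ 1) n]
  have h2 : (q ^ n - 1) / (q - 1) = (1 - q ^ n) / (1 - q) := by
    rw [← neg_sub q 1, ← neg_sub (q ^ n) 1, neg_div_neg_eq]
  rw [h2, div_le_div_iff₀ h1 h1]
  have : 0 ≤ q ^ n := pow_nonneg hq0 n
  nlinarith

lemma qNat_pos (hq : 0 < q) {n : ℕ} (hn : 0 < n) : 0 < qNat q n := by
  rcases Nat.exists_eq_succ_of_ne_zero hn.ne' with ⟨m, rfl⟩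
  rw [qNat, Finset.sum_range_succ']
  have : 0 ≤ ∑ i ∈ Finset.range m, q ^ (i + 1) :=
    Finset.sum_nonneg fun i _ => pow_nonneg hq.le _
  simp only [pow_zero]; linarith

lemma qFact_pos (hq : 0 < q) (n : ℕ) : 0 < qFact q n :=
  Finset.prod_pos fun i _ => qNat_pos hq (Nat.succ_pos i)

lemma qHc_pos (hq0 : 0 < q) (hq1 : q < 1) : ∀ n, 0 < qHc q n := by
  have h1 : (0:ℝ) < 1 - q := by linarith
  have h2 : 0 < 2 / Real.sqrt (1 - q) := by positivity
  intro n
  induction n using Nat.strong_induction_on with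
  | _ n ih =>
    match n with
    | 0 => exact one_pos
    | 1 => exact h2
    | (n+2) =>
      have := ih (n+1) (by omega)
      have := ih n (by omega)
      have : 0 < 1 / (1 - q) := by positivity
      simp only [qHc]; positivity

lemma qH_continuous (n : ℕ) (s : ℝ) : Continuous fun x => qH q n x s := by
  induction n using Nat.strong_induction_on with
  | _ n ih =>
    match n with
    | 0 => simpa [qH] using continuous_const
    | 1 => simpa [qH] using continuous_id'
    | (n+2) =>
      have h1 := ih (n+1) (by omega)
      have h2 := ih n (by omega)
      simp only [qH]
      exact (continuous_id.mul h1).sub (continuous_const.mul h2)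

lemma abs_qH_le (hq0 : 0 < q) (hq1 : q < 1) {x s : ℝ} (hs : 0 ≤ s)
    (hx : |x| ≤ 2 * Real.sqrt s / Real.sqrt (1 - q)) :
    ∀ n, |qH q n x s| ≤ qHc q n * Real.sqrt s ^ n := by
  have h1 : (0:ℝ) < 1 - q := by linarith
  have hss : 0 ≤ Real.sqrt s := Real.sqrt_nonneg s
  have hx' : |x| ≤ (2 / Real.sqrt (1 - q)) * Real.sqrt s := by
    rw [div_mul_eq_mul_div]; exact hx
  intro n
  induction n using Nat.strong_induction_on with
  | _ n ih =>
    match n with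
    | 0 => simp [qH, qHc]
    | 1 => simpa [qH, qHc] using hx'
    | (n+2) =>
      have ih1 := ih (n+1) (by omega)
      have ih0 := ih n (by omega)
      have hq1' : 0 ≤ qHc q (n+1) * Real.sqrt s ^ (n+1) :=
        mul_nonneg (qHc_pos hq0 hq1 _).le (pow_nonneg hss _)
      have hq0' : 0 ≤ qHc q n * Real.sqrt s ^ n :=
        mul_nonneg (qHc_pos hq0 hq1 _).le (pow_nonneg hss _)
      simp only [qH, qHc]
      calc |x * qH q (n+1) x s - s * qNat q (n+1) * qH q n x s|
          ≤ |x * qH q (n+1) x s| + |s * qNat q (n+1) * qH q n x s| := abs_sub (x * qH q (n+1) x s) (s * qNat q (n+1) * qH q n x s)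
        _ = |x| * |qH q (n+1) x s| + (s * qNat q (n+1)) * |qH q n x s| := by
            rw [abs_mul, abs_mul, abs_of_nonneg (mul_nonneg hs (qNat_nonneg hq0.le _))]
        _ ≤ ((2 / Real.sqrt (1 - q)) * Real.sqrt s) * (qHc q (n+1) * Real.sqrt s ^ (n+1))
            + (s * (1 / (1 - q))) * (qHc q n * Real.sqrt s ^ n) := by
            refine add_le_add (mul_le_mul hx' ih1 (abs_nonneg _) ?_)
              (mul_le_mul ?_ ih0 (abs_nonneg _) ?_)
            · positivity
            · exact mul_le_mul_of_nonneg_left (qNat_le hq0.le hq1 _) hs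
            · positivity
        _ = ((2 / Real.sqrt (1 - q)) * qHc q (n+1) + (1 / (1 - q)) * qHc q n) *
            Real.sqrt s ^ (n+2) := by
            rw [show s * (1 / (1 - q)) = Real.sqrt s ^ 2 * (1 / (1 - q)) by
              rw [Real.sq_sqrt hs]]
            ring

section
variable {Ω : Type*} [m0 : MeasurableSpace Ω] {μ : Measure Ω} [IsProbabilityMeasure μ]

lemma integrable_of_abs_le {f : Ω → ℝ} (hf : AEStronglyMeasurable f μ) {C : ℝ}
    (h : ∀ᵐ ω ∂μ, |f ω| ≤ C) : Integrable f μ :=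
  (integrable_const C).mono' hf (by simpa [Real.norm_eq_abs] using h)

variable {ℱ : Filtration ℝ m0} {q t : ℝ} {B : ℝ → Ω → ℝ}

lemma X_sm (hadp : Adapted ℱ B) (n : ℕ) (s : ℝ) :
    StronglyMeasurable[ℱ s] (fun ω => qH q n (B s ω) s) :=
  (qH_continuous n s).comp_stronglyMeasurable (hadp s).stronglyMeasurable

lemma X_aesm (hadp : Adapted ℱ B) (n : ℕ) (s : ℝ) :
    AEStronglyMeasurable (fun ω => qH q n (B s ω) s) μ :=
  ((X_sm hadp n s).mono (ℱ.le s)).aestronglyMeasurable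

lemma X_bound (hq0 : 0 < q) (hq1 : q < 1)
    (hbdd : ∀ s : ℝ, 0 ≤ s → ∀ᵐ ω ∂μ, |B s ω| ≤ 2 * Real.sqrt s / Real.sqrt (1 - q))
    {s : ℝ} (hs : 0 ≤ s) (n : ℕ) :
    ∀ᵐ ω ∂μ, |qH q n (B s ω) s| ≤ qHc q n * Real.sqrt s ^ n :=
  (hbdd s hs).mono fun ω h => abs_qH_le hq0 hq1 hs h n

lemma X_int (hq0 : 0 < q) (hq1 : q < 1) (hadp : Adapted ℱ B)
    (hbdd : ∀ s : ℝ, 0 ≤ s → ∀ᵐ ω ∂μ, |B s ω| ≤ 2 * Real.sqrt s / Real.sqrt (1 - q))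
    {s : ℝ} (hs : 0 ≤ s) (n : ℕ) :
    Integrable (fun ω => qH q n (B s ω) s) μ :=
  integrable_of_abs_le (X_aesm hadp n s) (X_bound hq0 hq1 hbdd hs n)

lemma X_mul_int (hq0 : 0 < q) (hq1 : q < 1) (hadp : Adapted ℱ B)
    (hbdd : ∀ s : ℝ, 0 ≤ s → ∀ᵐ ω ∂μ, |B s ω| ≤ 2 * Real.sqrt s / Real.sqrt (1 - q))
    {s u : ℝ} (hs : 0 ≤ s) (hu : 0 ≤ u) (m n : ℕ) :
    Integrable (fun ω => qH q m (B s ω) s * qH q n (B u ω) u) μ := by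
  refine integrable_of_abs_le ((X_aesm hadp m s).mul (X_aesm hadp n u))
    (C := (qHc q m * Real.sqrt s ^ m) * (qHc q n * Real.sqrt u ^ n)) ?_
  filter_upwards [X_bound hq0 hq1 hbdd hs m, X_bound hq0 hq1 hbdd hu n] with ω h1 h2
  rw [abs_mul]
  exact mul_le_mul h1 h2 (abs_nonneg _) ((abs_nonneg _).trans h1)

lemma cross (hq0 : 0 < q) (hq1 : q < 1) (hadp : Adapted ℱ B)
    (hbdd : ∀ s : ℝ, 0 ≤ s → ∀ᵐ ω ∂μ, |B s ω| ≤ 2 * Real.sqrt s / Real.sqrt (1 - q))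
    (hmart : ∀ (n : ℕ) (s u : ℝ), 0 ≤ s → s ≤ u →
      μ[fun ω => qH q n (B u ω) u | ℱ s] =ᵐ[μ] fun ω => qH q n (B s ω) s)
    (horth : ∀ s : ℝ, 0 < s → ∀ m n : ℕ,
      ∫ ω, qH q n (B s ω) s * qH q m (B s ω) s ∂μ =
        if m = n then qFact q n * s ^ n else 0)
    {s u : ℝ} (hs : 0 < s) (hsu : s ≤ u) (m n : ℕ) :
    ∫ ω, qH q n (B u ω) u * qH q m (B s ω) s ∂μ =
      if m = n then qFact q n * s ^ n else 0 := by
  have hu : (0:ℝ) ≤ u := hs.le.trans hsu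
  have hgf : Integrable ((fun ω => qH q m (B s ω) s) * fun ω => qH q n (B u ω) u) μ :=
    X_mul_int hq0 hq1 hadp hbdd hs.le hu m n
  have hpull := condExp_mul_of_stronglyMeasurable_left (m := ℱ s) (X_sm hadp m s) hgf
    (X_int hq0 hq1 hadp hbdd hu n)
  calc ∫ ω, qH q n (B u ω) u * qH q m (B s ω) s ∂μ
      = ∫ ω, ((fun ω => qH q m (B s ω) s) * fun ω => qH q n (B u ω) u) ω ∂μ := by
        refine integral_congr_ae (Eventually.of_forall fun ω => ?_)
        simp [mul_comm]
    _ = ∫ ω, (μ[(fun ω => qH q m (B s ω) s) * fun ω => qH q n (B u ω) u | ℱ s]) ω ∂μ :=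
        (integral_condExp (ℱ.le s)).symm
    _ = ∫ ω, qH q m (B s ω) s * (μ[fun ω => qH q n (B u ω) u | ℱ s]) ω ∂μ :=
        integral_congr_ae (hpull.mono fun ω hω => by simpa using hω)
    _ = ∫ ω, qH q m (B s ω) s * qH q n (B s ω) s ∂μ :=
        integral_congr_ae ((hmart n s u hs.le hsu).mono fun ω hω =>
          congrArg (fun z => qH q m (B s ω) s * z) hω)
    _ = ∫ ω, qH q n (B s ω) s * qH q m (B s ω) s ∂μ := by
        refine integral_congr_ae (Eventually.of_forall fun ω => ?_); ring
    _ = _ := horth s hs m n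

end

noncomputable def Dterm {Ω : Type*} (q t : ℝ) (B : ℝ → Ω → ℝ) (b : ℕ → ℝ → ℝ)
    (m k : ℕ) (ω : Ω) : ℝ :=
  b m (q ^ k * t) * (qH q (m + 1) (B (q ^ k * t) ω) (q ^ k * t) -
    qH q (m + 1) (B (q ^ (k + 1) * t) ω) (q ^ (k + 1) * t))

section
variable {Ω : Type*} [m0 : MeasurableSpace Ω] {μ : Measure Ω} [IsProbabilityMeasure μ]
variable {ℱ : Filtration ℝ m0} {q t : ℝ} {B : ℝ → Ω → ℝ}

lemma cross' (hq0 : 0 < q) (hq1 : q < 1) (hadp : Adapted ℱ B)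
    (hbdd : ∀ s : ℝ, 0 ≤ s → ∀ᵐ ω ∂μ, |B s ω| ≤ 2 * Real.sqrt s / Real.sqrt (1 - q))
    (hmart : ∀ (n : ℕ) (s u : ℝ), 0 ≤ s → s ≤ u →
      μ[fun ω => qH q n (B u ω) u | ℱ s] =ᵐ[μ] fun ω => qH q n (B s ω) s)
    (horth : ∀ s : ℝ, 0 < s → ∀ m n : ℕ,
      ∫ ω, qH q n (B s ω) s * qH q m (B s ω) s ∂μ =
        if m = n then qFact q n * s ^ n else 0)
    {s u : ℝ} (hs : 0 < s) (hu : 0 < u) (m n : ℕ) :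
    ∫ ω, qH q n (B u ω) u * qH q m (B s ω) s ∂μ =
      if m = n then qFact q n * (min s u) ^ n else 0 := by
  rcases le_total s u with h | h
  · rw [min_eq_left h]; exact cross hq0 hq1 hadp hbdd hmart horth hs h m n
  · rw [min_eq_right h]
    rw [show ∫ ω, qH q n (B u ω) u * qH q m (B s ω) s ∂μ
        = ∫ ω, qH q m (B s ω) s * qH q n (B u ω) u ∂μ from
      integral_congr_ae (Eventually.of_forall fun ω => mul_comm _ _)]
    rw [cross hq0 hq1 hadp hbdd hmart horth hu h n m]
    rcases eq_or_ne m n with rfl | hmn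
    · simp
    · simp [hmn, Ne.symm hmn]

lemma tk_pos (hq0 : 0 < q) (ht : 0 < t) (k : ℕ) : 0 < q ^ k * t := by positivity

lemma tk_anti (hq0 : 0 < q) (hq1 : q < 1) (ht : 0 < t) {k j : ℕ} (h : k ≤ j) :
    q ^ j * t ≤ q ^ k * t :=
  mul_le_mul_of_nonneg_right (pow_le_pow_of_le_one hq0.le hq1.le h) ht.le

lemma Dmoment (hq0 : 0 < q) (hq1 : q < 1) (ht : 0 < t) (hadp : Adapted ℱ B)
    (hbdd : ∀ s : ℝ, 0 ≤ s → ∀ᵐ ω ∂μ, |B s ω| ≤ 2 * Real.sqrt s / Real.sqrt (1 - q))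
    (hmart : ∀ (n : ℕ) (s u : ℝ), 0 ≤ s → s ≤ u →
      μ[fun ω => qH q n (B u ω) u | ℱ s] =ᵐ[μ] fun ω => qH q n (B s ω) s)
    (horth : ∀ s : ℝ, 0 < s → ∀ m n : ℕ,
      ∫ ω, qH q n (B s ω) s * qH q m (B s ω) s ∂μ =
        if m = n then qFact q n * s ^ n else 0)
    (b : ℕ → ℝ → ℝ) (m n k j : ℕ) :
    ∫ ω, Dterm q t B b m k ω * Dterm q t B b n j ω ∂μ =
      if m = n ∧ k = j then
        (b m (q ^ k * t)) ^ 2 * qFact q (m + 1) *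
          ((q ^ k * t) ^ (m + 1) - (q ^ (k + 1) * t) ^ (m + 1))
      else 0 := by
  have hpos := tk_pos (q := q) (t := t) hq0 ht
  -- abbreviations
  set X : ℕ → ℕ → Ω → ℝ := fun p i ω => qH q p (B (q ^ i * t) ω) (q ^ i * t) with hX
  have hint : ∀ (p r i l : ℕ), Integrable (fun ω => X p i ω * X r l ω) μ :=
    fun p r i l => X_mul_int hq0 hq1 hadp hbdd (hpos i).le (hpos l).le p r
  have hI : ∀ (i l : ℕ), ∫ ω, X (m+1) i ω * X (n+1) l ω ∂μ =
      if n = m then qFact q (m+1) * (q ^ (max i l) * t) ^ (m+1) else 0 := by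
    intro i l
    have := cross' hq0 hq1 hadp hbdd hmart horth (hpos l) (hpos i) (n+1) (m+1)
    rw [this]
    have hmin : min (q ^ l * t) (q ^ i * t) = q ^ (max i l) * t := by
      rcases le_total i l with h | h
      · rw [min_eq_left (tk_anti hq0 hq1 ht h), max_eq_right h]
      · rw [min_eq_right (tk_anti hq0 hq1 ht h), max_eq_left h]
    rcases eq_or_ne n m with rfl | hmn
    · simp [hmin]
    · simp [hmn, fun h : n + 1 = m + 1 => hmn (Nat.succ_injective h)]
  set A1 : Ω → ℝ := fun ω => X (m+1) k ω * X (n+1) j ω with hA1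
  set A2 : Ω → ℝ := fun ω => X (m+1) k ω * X (n+1) (j+1) ω with hA2
  set A3 : Ω → ℝ := fun ω => X (m+1) (k+1) ω * X (n+1) j ω with hA3
  set A4 : Ω → ℝ := fun ω => X (m+1) (k+1) ω * X (n+1) (j+1) ω with hA4
  have i1 : Integrable A1 μ := hint _ _ _ _
  have i2 : Integrable A2 μ := hint _ _ _ _
  have i3 : Integrable A3 μ := hint _ _ _ _
  have i4 : Integrable A4 μ := hint _ _ _ _
  have i12 : Integrable (fun ω => A1 ω - A2 ω) μ := i1.sub i2
  have i123 : Integrable (fun ω => A1 ω - A2 ω - A3 ω) μ := i12.sub i3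
  have h4 : ∫ ω, (A1 ω - A2 ω - A3 ω + A4 ω) ∂μ
      = ((∫ ω, A1 ω ∂μ) - (∫ ω, A2 ω ∂μ) - (∫ ω, A3 ω ∂μ)) + ∫ ω, A4 ω ∂μ := by
    rw [integral_add i123 i4, integral_sub i12 i3, integral_sub i1 i2]
  have hexp : ∫ ω, Dterm q t B b m k ω * Dterm q t B b n j ω ∂μ =
      b m (q ^ k * t) * b n (q ^ j * t) *
      (((∫ ω, A1 ω ∂μ) - (∫ ω, A2 ω ∂μ) - (∫ ω, A3 ω ∂μ)) + ∫ ω, A4 ω ∂μ) := by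
    rw [← h4, ← integral_const_mul]
    refine integral_congr_ae (Eventually.of_forall fun ω => ?_)
    simp only [Dterm, hX, hA1, hA2, hA3, hA4]
    ring
  rw [hexp, hA1, hA2, hA3, hA4, hI, hI, hI, hI]
  split_ifs with h1 h2 h2
  · obtain ⟨-, rfl⟩ := h2
    rw [Nat.max_self, Nat.max_eq_right (by omega : k ≤ k + 1), Nat.max_eq_left (by omega : k ≤ k + 1),
      Nat.max_self, h1]
    ring
  · have hkj : k ≠ j := fun h => h2 ⟨h1.symm, h⟩
    rcases Nat.lt_or_ge k j with h | h
    · rw [Nat.max_eq_right h.le, Nat.max_eq_right (by omega : k ≤ j + 1),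
        Nat.max_eq_right (by omega : k + 1 ≤ j), Nat.max_eq_right (by omega : k + 1 ≤ j + 1)]
      ring
    · have h' : j < k := lt_of_le_of_ne h (Ne.symm hkj)
      rw [Nat.max_eq_left (by omega : j ≤ k), Nat.max_eq_left (by omega : j + 1 ≤ k),
        Nat.max_eq_left (by omega : j ≤ k + 1), Nat.max_eq_left (by omega : j + 1 ≤ k + 1)]
      ring
  · exact absurd h2.1.symm h1
  · ring

end

section
variable {Ω : Type*} [m0 : MeasurableSpace Ω] {μ : Measure Ω} [IsProbabilityMeasure μ]
variable {ℱ : Filtration ℝ m0} {q t : ℝ} {B : ℝ → Ω → ℝ}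

lemma sqrt_tk_pow_le (hq0 : 0 < q) (hq1 : q < 1) (ht : 0 < t) (k p : ℕ) (hp : 1 ≤ p) :
    Real.sqrt (q ^ k * t) ^ p ≤ Real.sqrt q ^ k * Real.sqrt t ^ p := by
  have hsq : Real.sqrt (q ^ k) = Real.sqrt q ^ k := by
    have h2 : (Real.sqrt q ^ k) ^ 2 = q ^ k := by
      rw [← pow_mul, pow_mul', Real.sq_sqrt hq0.le]
    rw [← h2, Real.sqrt_sq (pow_nonneg (Real.sqrt_nonneg q) k)]
  rw [Real.sqrt_mul (pow_nonneg hq0.le k) t, hsq, mul_pow, ← pow_mul]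
  have h1 : Real.sqrt q ^ (k * p) ≤ Real.sqrt q ^ k := by
    apply pow_le_pow_of_le_one (Real.sqrt_nonneg q) (Real.sqrt_le_one.2 hq1.le)
    nlinarith
  exact mul_le_mul_of_nonneg_right h1 (pow_nonneg (Real.sqrt_nonneg t) p)

lemma Dterm_aesm (hadp : Adapted ℱ B) (b : ℕ → ℝ → ℝ) (m k : ℕ) :
    AEStronglyMeasurable (Dterm q t B b m k) μ := by
  apply AEStronglyMeasurable.const_mul
  exact (X_aesm hadp (m+1) (q ^ k * t)).sub (X_aesm hadp (m+1) (q ^ (k+1) * t))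

lemma Dterm_bound (hq0 : 0 < q) (hq1 : q < 1) (ht : 0 < t)
    (hbdd : ∀ s : ℝ, 0 ≤ s → ∀ᵐ ω ∂μ, |B s ω| ≤ 2 * Real.sqrt s / Real.sqrt (1 - q))
    (b : ℕ → ℝ → ℝ) (m : ℕ) {M : ℝ} (hM : ∀ s ∈ Set.Icc (0 : ℝ) t, |b m s| ≤ M) :
    ∀ᵐ ω ∂μ, ∀ k : ℕ, |Dterm q t B b m k ω| ≤
      (M * (2 * qHc q (m+1) * Real.sqrt t ^ (m+1))) * Real.sqrt q ^ k := by
  rw [ae_all_iff]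
  intro k
  have hks := (tk_pos hq0 ht k).le
  have hks' := (tk_pos hq0 ht (k+1)).le
  filter_upwards [X_bound hq0 hq1 hbdd hks (m+1), X_bound hq0 hq1 hbdd hks' (m+1)]
    with ω h1 h2
  have htk : q ^ k * t ∈ Set.Icc (0:ℝ) t := ⟨hks, by
    simpa using tk_anti hq0 hq1 ht (Nat.zero_le k)⟩
  have hMk := hM _ htk
  have hM0 : 0 ≤ M := (abs_nonneg _).trans hMk
  have e1 : Real.sqrt (q ^ k * t) ^ (m+1) ≤ Real.sqrt q ^ k * Real.sqrt t ^ (m+1) :=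
    sqrt_tk_pow_le hq0 hq1 ht k (m+1) (by omega)
  have e2 : Real.sqrt (q ^ (k+1) * t) ^ (m+1) ≤ Real.sqrt q ^ k * Real.sqrt t ^ (m+1) := by
    refine (sqrt_tk_pow_le hq0 hq1 ht (k+1) (m+1) (by omega)).trans ?_
    refine mul_le_mul_of_nonneg_right ?_ (pow_nonneg (Real.sqrt_nonneg t) _)
    exact pow_le_pow_of_le_one (Real.sqrt_nonneg q) (Real.sqrt_le_one.2 hq1.le) (by omega)
  have hc := (qHc_pos hq0 hq1 (m+1)).le
  calc |Dterm q t B b m k ω|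
      = |b m (q ^ k * t)| * |qH q (m+1) (B (q ^ k * t) ω) (q ^ k * t) -
          qH q (m+1) (B (q ^ (k+1) * t) ω) (q ^ (k+1) * t)| := abs_mul _ _
    _ ≤ M * (qHc q (m+1) * (Real.sqrt q ^ k * Real.sqrt t ^ (m+1)) +
          qHc q (m+1) * (Real.sqrt q ^ k * Real.sqrt t ^ (m+1))) := by
        refine mul_le_mul hMk ?_ (abs_nonneg _) hM0
        refine (abs_sub _ _).trans (add_le_add (h1.trans ?_) (h2.trans ?_))
        · exact mul_le_mul_of_nonneg_left e1 hc
        · exact mul_le_mul_of_nonneg_left e2 hc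
    _ = (M * (2 * qHc q (m+1) * Real.sqrt t ^ (m+1))) * Real.sqrt q ^ k := by ring

lemma geo_summable (hq0 : 0 < q) (hq1 : q < 1) (K : ℝ) :
    Summable (fun k : ℕ => K * Real.sqrt q ^ k) :=
  (summable_geometric_of_lt_one (Real.sqrt_nonneg q)
    (by rw [← Real.sqrt_one]; exact Real.sqrt_lt_sqrt hq0.le hq1)).mul_left K

end

section
variable {Ω : Type*} [m0 : MeasurableSpace Ω] {μ : Measure Ω} [IsProbabilityMeasure μ]
variable {ℱ : Filtration ℝ m0} {q t : ℝ} {B : ℝ → Ω → ℝ}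

-- partial sums of Dterm
noncomputable def DS (q t : ℝ) (B : ℝ → Ω → ℝ) (b : ℕ → ℝ → ℝ) (m N : ℕ) (ω : Ω) : ℝ :=
  ∑ k ∈ Finset.range N, Dterm q t B b m k ω

lemma DS_aesm (hadp : Adapted ℱ B) (b : ℕ → ℝ → ℝ) (m N : ℕ) :
    AEStronglyMeasurable (DS q t B b m N) μ :=
  Finset.aestronglyMeasurable_fun_sum _ fun k _ => Dterm_aesm hadp b m k

-- the tail bound for partial sums vs the tsum, on the good event
lemma D_tail (hq0 : 0 < q) (hq1 : q < 1) {K : ℝ} {m : ℕ} {b : ℕ → ℝ → ℝ} {ω : Ω}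
    (hω : ∀ k : ℕ, |Dterm q t B b m k ω| ≤ K * Real.sqrt q ^ k) (N : ℕ) :
    |DS q t B b m N ω - ∑' k, Dterm q t B b m k ω| ≤
      (K * (1 - Real.sqrt q)⁻¹) * Real.sqrt q ^ N := by
  have hr0 : (0:ℝ) ≤ Real.sqrt q := Real.sqrt_nonneg q
  have hr1 : Real.sqrt q < 1 := by rw [← Real.sqrt_one]; exact Real.sqrt_lt_sqrt hq0.le hq1
  have hK0 : 0 ≤ K := by
    have := (abs_nonneg _).trans (hω 0); simpa using this
  have hgeo : Summable (fun k : ℕ => K * Real.sqrt q ^ k) := geo_summable hq0 hq1 K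
  have hsm : Summable (fun k => Dterm q t B b m k ω) :=
    Summable.of_abs (Summable.of_nonneg_of_le (fun k => abs_nonneg _) hω hgeo)
  have hshift : Summable (fun k => Dterm q t B b m (k + N) ω) :=
    (summable_nat_add_iff N).2 hsm
  have htel := Summable.sum_add_tsum_nat_add N hsm
  have : DS q t B b m N ω - ∑' k, Dterm q t B b m k ω = -(∑' k, Dterm q t B b m (k + N) ω) := by
    rw [DS, ← htel]; ring
  rw [this, abs_neg]
  have habs : Summable (fun k => |Dterm q t B b m (k + N) ω|) :=
    Summable.of_nonneg_of_le (fun k => abs_nonneg _)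
      (fun k => hω (k + N)) (by simpa using (summable_nat_add_iff (f := fun k => K * Real.sqrt q ^ k) N).2 hgeo)
  calc |∑' k, Dterm q t B b m (k + N) ω| ≤ ∑' k, |Dterm q t B b m (k + N) ω| := by
        simpa [Real.norm_eq_abs] using norm_tsum_le_tsum_norm (f := fun k => Dterm q t B b m (k + N) ω) (by simpa [Real.norm_eq_abs] using habs)
    _ ≤ ∑' k, (K * Real.sqrt q ^ N) * Real.sqrt q ^ k := by
        refine Summable.tsum_le_tsum (fun k => ?_) habs ?_
        · calc |Dterm q t B b m (k + N) ω| ≤ K * Real.sqrt q ^ (k + N) := hω (k + N)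
            _ = (K * Real.sqrt q ^ N) * Real.sqrt q ^ k := by rw [pow_add]; ring
        · exact geo_summable hq0 hq1 _
    _ = (K * (1 - Real.sqrt q)⁻¹) * Real.sqrt q ^ N := by
        rw [tsum_mul_left, tsum_geometric_of_lt_one hr0 hr1]; ring

end

section
variable {Ω : Type*} [m0 : MeasurableSpace Ω] {μ : Measure Ω} [IsProbabilityMeasure μ]
variable {ℱ : Filtration ℝ m0} {q t : ℝ} {B : ℝ → Ω → ℝ}

lemma Dterm_bound' (hq0 : 0 < q) (hq1 : q < 1) (ht : 0 < t)
    (hbdd : ∀ s : ℝ, 0 ≤ s → ∀ᵐ ω ∂μ, |B s ω| ≤ 2 * Real.sqrt s / Real.sqrt (1 - q))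
    (b : ℕ → ℝ → ℝ) (m k : ℕ) :
    ∀ᵐ ω ∂μ, |Dterm q t B b m k ω| ≤
      |b m (q ^ k * t)| * (qHc q (m+1) * Real.sqrt (q ^ k * t) ^ (m+1) +
        qHc q (m+1) * Real.sqrt (q ^ (k+1) * t) ^ (m+1)) := by
  filter_upwards [X_bound hq0 hq1 hbdd (tk_pos hq0 ht k).le (m+1),
    X_bound hq0 hq1 hbdd (tk_pos hq0 ht (k+1)).le (m+1)] with ω h1 h2
  rw [Dterm, abs_mul]
  exact mul_le_mul_of_nonneg_left ((abs_sub _ _).trans (add_le_add h1 h2)) (abs_nonneg _)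

lemma Dmul_int (hq0 : 0 < q) (hq1 : q < 1) (ht : 0 < t) (hadp : Adapted ℱ B)
    (hbdd : ∀ s : ℝ, 0 ≤ s → ∀ᵐ ω ∂μ, |B s ω| ≤ 2 * Real.sqrt s / Real.sqrt (1 - q))
    (b : ℕ → ℝ → ℝ) (m n k j : ℕ) :
    Integrable (fun ω => Dterm q t B b m k ω * Dterm q t B b n j ω) μ := by
  refine integrable_of_abs_le ((Dterm_aesm hadp b m k).mul (Dterm_aesm hadp b n j))
    (C := (|b m (q ^ k * t)| * (qHc q (m+1) * Real.sqrt (q ^ k * t) ^ (m+1) +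
        qHc q (m+1) * Real.sqrt (q ^ (k+1) * t) ^ (m+1))) *
      (|b n (q ^ j * t)| * (qHc q (n+1) * Real.sqrt (q ^ j * t) ^ (n+1) +
        qHc q (n+1) * Real.sqrt (q ^ (j+1) * t) ^ (n+1)))) ?_
  filter_upwards [Dterm_bound' hq0 hq1 ht hbdd b m k, Dterm_bound' hq0 hq1 ht hbdd b n j]
    with ω h1 h2
  rw [abs_mul]
  exact mul_le_mul h1 h2 (abs_nonneg _) ((abs_nonneg _).trans h1)

lemma SS_moment (hq0 : 0 < q) (hq1 : q < 1) (ht : 0 < t) (hadp : Adapted ℱ B)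
    (hbdd : ∀ s : ℝ, 0 ≤ s → ∀ᵐ ω ∂μ, |B s ω| ≤ 2 * Real.sqrt s / Real.sqrt (1 - q))
    (hmart : ∀ (n : ℕ) (s u : ℝ), 0 ≤ s → s ≤ u →
      μ[fun ω => qH q n (B u ω) u | ℱ s] =ᵐ[μ] fun ω => qH q n (B s ω) s)
    (horth : ∀ s : ℝ, 0 < s → ∀ m n : ℕ,
      ∫ ω, qH q n (B s ω) s * qH q m (B s ω) s ∂μ =
        if m = n then qFact q n * s ^ n else 0)
    (b : ℕ → ℝ → ℝ) (m n N : ℕ) :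
    ∫ ω, DS q t B b m N ω * DS q t B b n N ω ∂μ =
      if m = n then ∑ k ∈ Finset.range N, (b m (q ^ k * t)) ^ 2 * qFact q (m + 1) *
        ((q ^ k * t) ^ (m + 1) - (q ^ (k + 1) * t) ^ (m + 1)) else 0 := by
  have hDint := Dmul_int (μ := μ) hq0 hq1 ht hadp hbdd b
  have step1 : ∫ ω, DS q t B b m N ω * DS q t B b n N ω ∂μ =
      ∑ k ∈ Finset.range N, ∑ j ∈ Finset.range N,
        ∫ ω, Dterm q t B b m k ω * Dterm q t B b n j ω ∂μ := by
    rw [show (fun ω => DS q t B b m N ω * DS q t B b n N ω)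
        = fun ω => ∑ k ∈ Finset.range N, ∑ j ∈ Finset.range N,
          Dterm q t B b m k ω * Dterm q t B b n j ω from funext fun ω => by
        rw [DS, DS, Finset.sum_mul_sum]]
    rw [integral_finset_sum _ fun k _ => integrable_finset_sum _ fun j _ => hDint m n k j]
    exact Finset.sum_congr rfl fun k _ =>
      integral_finset_sum _ fun j _ => hDint m n k j
  rw [step1]
  have step2 : ∀ k ∈ Finset.range N, ∑ j ∈ Finset.range N,
      ∫ ω, Dterm q t B b m k ω * Dterm q t B b n j ω ∂μ =
      if m = n then (b m (q ^ k * t)) ^ 2 * qFact q (m + 1) *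
        ((q ^ k * t) ^ (m + 1) - (q ^ (k + 1) * t) ^ (m + 1)) else 0 := by
    intro k hk
    rw [Finset.sum_congr rfl fun j _ =>
      Dmoment hq0 hq1 ht hadp hbdd hmart horth b m n k j]
    rcases eq_or_ne m n with rfl | hmn
    · simp only [true_and, if_pos rfl]
      rw [Finset.sum_ite_eq _ k _]
      simp [hk]
    · simp [hmn]
  rw [Finset.sum_congr rfl step2]
  rcases eq_or_ne m n with rfl | hmn
  · simp
  · simp [hmn]

end

section
variable {q t : ℝ}

lemma inner_summable (hq0 : 0 < q) (hq1 : q < 1) (ht : 0 < t) (b : ℕ → ℝ → ℝ) (m : ℕ)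
    {M : ℝ} (hM : ∀ s ∈ Set.Icc (0 : ℝ) t, |b m s| ≤ M) :
    Summable (fun k : ℕ => q ^ k * (b m (q ^ k * t)) ^ 2 * (q ^ k * t) ^ m) := by
  refine Summable.of_nonneg_of_le (fun k => ?_) (fun k => ?_)
    ((summable_geometric_of_lt_one hq0.le hq1).mul_left (M ^ 2 * t ^ m))
  · have := (tk_pos hq0 ht k).le
    positivity
  · have htk : q ^ k * t ∈ Set.Icc (0:ℝ) t :=
      ⟨(tk_pos hq0 ht k).le, by simpa using tk_anti hq0 hq1 ht (Nat.zero_le k)⟩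
    have hb2 : (b m (q ^ k * t)) ^ 2 ≤ M ^ 2 := by
      rw [← sq_abs]
      exact pow_le_pow_left₀ (abs_nonneg _) (hM _ htk) 2
    have htm : (q ^ k * t) ^ m ≤ t ^ m := by
      refine pow_le_pow_left₀ (tk_pos hq0 ht k).le ?_ m
      simpa using tk_anti hq0 hq1 ht (Nat.zero_le k)
    have h1 : (0:ℝ) ≤ q ^ k := pow_nonneg hq0.le k
    calc q ^ k * (b m (q ^ k * t)) ^ 2 * (q ^ k * t) ^ m
        ≤ q ^ k * M ^ 2 * t ^ m := by
          refine mul_le_mul (mul_le_mul_of_nonneg_left hb2 h1) htm ?_ ?_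
          · positivity
          · positivity
      _ = M ^ 2 * t ^ m * q ^ k := by ring

lemma partial_bound (hq0 : 0 < q) (hq1 : q < 1) (ht : 0 < t) (b : ℕ → ℝ → ℝ) (m : ℕ)
    {M : ℝ} (hM : ∀ s ∈ Set.Icc (0 : ℝ) t, |b m s| ≤ M) (N : ℕ) :
    (1 / qFact q (m+1)) ^ 2 * (∑ k ∈ Finset.range N, (b m (q ^ k * t)) ^ 2 *
        qFact q (m + 1) * ((q ^ k * t) ^ (m + 1) - (q ^ (k + 1) * t) ^ (m + 1)))
      ≤ (1 / qFact q m) * ((1 - q) * t *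
        ∑' k : ℕ, q ^ k * (b m (q ^ k * t)) ^ 2 * (q ^ k * t) ^ m) := by
  have hF0 := qFact_pos hq0 m
  have hQ := qNat_pos hq0 (Nat.succ_pos m)
  have hF1eq : qFact q (m + 1) = qFact q m * qNat q (m + 1) := Finset.prod_range_succ _ m
  have hqn : (1 : ℝ) - q ^ (m + 1) = (1 - q) * qNat q (m + 1) := by
    have h := geom_sum_mul (x := q) (n := m + 1)
    rw [qNat]
    linear_combination h
  have hterm : ∀ k : ℕ, (1 / qFact q (m+1)) ^ 2 * ((b m (q ^ k * t)) ^ 2 *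
      qFact q (m + 1) * ((q ^ k * t) ^ (m + 1) - (q ^ (k + 1) * t) ^ (m + 1)))
      = (1 / qFact q m) * ((1 - q) * t * (q ^ k * (b m (q ^ k * t)) ^ 2 * (q ^ k * t) ^ m)) := by
    intro k
    have hdiff : (q ^ k * t) ^ (m + 1) - (q ^ (k + 1) * t) ^ (m + 1)
        = (q ^ k * t) ^ m * (q ^ k * t) * ((1 - q) * qNat q (m + 1)) := by
      rw [← hqn]
      have e1 : (q ^ (k + 1) * t) = q * (q ^ k * t) := by ring
      rw [e1, mul_pow, pow_succ]
      ring
    rw [hdiff, hF1eq]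
    field_simp
  calc (1 / qFact q (m+1)) ^ 2 * (∑ k ∈ Finset.range N, (b m (q ^ k * t)) ^ 2 *
        qFact q (m + 1) * ((q ^ k * t) ^ (m + 1) - (q ^ (k + 1) * t) ^ (m + 1)))
      = ∑ k ∈ Finset.range N, (1 / qFact q m) *
          ((1 - q) * t * (q ^ k * (b m (q ^ k * t)) ^ 2 * (q ^ k * t) ^ m)) := by
        rw [Finset.mul_sum]
        exact Finset.sum_congr rfl fun k _ => hterm k
    _ = (1 / qFact q m) * ((1 - q) * t *
          ∑ k ∈ Finset.range N, q ^ k * (b m (q ^ k * t)) ^ 2 * (q ^ k * t) ^ m) := by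
        rw [Finset.mul_sum, Finset.mul_sum]
    _ ≤ _ := by
        have hc : (0:ℝ) ≤ (1 / qFact q m) * ((1 - q) * t) := by
          have : (0:ℝ) < 1 - q := by linarith
          positivity
        rw [show (1 / qFact q m) * ((1 - q) * t *
            ∑ k ∈ Finset.range N, q ^ k * (b m (q ^ k * t)) ^ 2 * (q ^ k * t) ^ m)
          = ((1 / qFact q m) * ((1 - q) * t)) *
            ∑ k ∈ Finset.range N, q ^ k * (b m (q ^ k * t)) ^ 2 * (q ^ k * t) ^ m by ring,
          show (1 / qFact q m) * ((1 - q) * t *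
            ∑' k : ℕ, q ^ k * (b m (q ^ k * t)) ^ 2 * (q ^ k * t) ^ m)
          = ((1 / qFact q m) * ((1 - q) * t)) *
            ∑' k : ℕ, q ^ k * (b m (q ^ k * t)) ^ 2 * (q ^ k * t) ^ m by ring]
        refine mul_le_mul_of_nonneg_left ?_ hc
        refine Summable.sum_le_tsum _ (fun k _ => ?_) (inner_summable hq0 hq1 ht b m hM)
        have := (tk_pos hq0 ht k).le
        positivity
end

section
variable {Ω : Type*} [m0 : MeasurableSpace Ω] {μ : Measure Ω} [IsProbabilityMeasure μ]

-- ‖∑ orth‖² = ∑ ‖·‖²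
lemma norm_sq_sum_orth {E : Type*} [NormedAddCommGroup E] [InnerProductSpace ℝ E]
    (s : Finset ℕ) (v : ℕ → E)
    (h : ∀ i ∈ s, ∀ j ∈ s, i ≠ j → inner ℝ (v i) (v j) = (0:ℝ)) :
    ‖∑ i ∈ s, v i‖ ^ 2 = ∑ i ∈ s, ‖v i‖ ^ 2 := by
  rw [← real_inner_self_eq_norm_sq, inner_sum]
  rw [show ∑ i ∈ s, (inner ℝ (∑ j ∈ s, v j) (v i) : ℝ)
      = ∑ i ∈ s, ∑ j ∈ s, (inner ℝ (v j) (v i) : ℝ) from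
    Finset.sum_congr rfl fun i _ => sum_inner _ _ _]
  refine Finset.sum_congr rfl fun i hi => ?_
  rw [Finset.sum_eq_single i (fun j hj hij => h j hj i hi hij) (fun hi' => absurd hi hi'),
    real_inner_self_eq_norm_sq]
end

section
variable {Ω : Type*} [m0 : MeasurableSpace Ω] {μ : Measure Ω} [IsProbabilityMeasure μ]

lemma coeFn_finset_sum (s : Finset ℕ) (F : ℕ → Lp ℝ 2 μ) :
    ⇑(∑ i ∈ s, F i) =ᵐ[μ] fun ω => ∑ i ∈ s, F i ω := by
  classical
  induction s using Finset.induction_on with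
  | empty => simp only [Finset.sum_empty]; exact Lp.coeFn_zero _ _ _
  | @insert a s h ih =>
    rw [Finset.sum_insert h]
    filter_upwards [Lp.coeFn_add (F a) (∑ i ∈ s, F i), ih] with ω h1 h2
    simp only [Finset.sum_insert h, h1, Pi.add_apply, h2]
end

/-- if the coefficients `b_n` are bounded on `[0,t]` and
`∑_n (1/[n]_q!) ∫_0^t b_n(s)² s^n d_q s < ∞`, then the partial stochastic integrals
`S_N = ∑_{m≤N} (1/[m+1]_q!) ∑_k b_m(q^k t)(h_{m+1}(B_{q^k t};q^k t) − h_{m+1}(B_{q^{k+1}t};q^{k+1}t))`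
are well defined (inner series converge a.s. and in `L²`) and `(S_N)` converges in `L²(P)`. -/
theorem q_stochastic_integral_L2_extension
    {Ω : Type*} [m0 : MeasurableSpace Ω] (μ : Measure Ω) [IsProbabilityMeasure μ]
    (ℱ : Filtration ℝ m0) (q t : ℝ) (hq0 : 0 < q) (hq1 : q < 1) (ht : 0 < t)
    (B : ℝ → Ω → ℝ) (hadp : Adapted ℱ B) (hB0 : ∀ ω, B 0 ω = 0)
    (hbdd : ∀ s : ℝ, 0 ≤ s → ∀ᵐ ω ∂μ, |B s ω| ≤ 2 * Real.sqrt s / Real.sqrt (1 - q))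
    (hmart : ∀ (n : ℕ) (s u : ℝ), 0 ≤ s → s ≤ u →
      μ[fun ω => qH q n (B u ω) u | ℱ s] =ᵐ[μ] fun ω => qH q n (B s ω) s)
    (horth : ∀ s : ℝ, 0 < s → ∀ m n : ℕ,
      ∫ ω, qH q n (B s ω) s * qH q m (B s ω) s ∂μ =
        if m = n then qFact q n * s ^ n else 0)
    (b : ℕ → ℝ → ℝ)
    (hb : ∀ n : ℕ, ∃ M : ℝ, ∀ s ∈ Set.Icc (0 : ℝ) t, |b n s| ≤ M)
    (hsum : Summable (fun n : ℕ => (1 / qFact q n) *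
      ((1 - q) * t * ∑' k : ℕ, q ^ k * (b n (q ^ k * t)) ^ 2 * (q ^ k * t) ^ n))) :
    ∃ J : ℕ → Ω → ℝ,
      (∀ m : ℕ,
        (∀ᵐ ω ∂μ, Tendsto
          (fun N : ℕ => ∑ k ∈ Finset.range N, b m (q ^ k * t) *
            (qH q (m + 1) (B (q ^ k * t) ω) (q ^ k * t) -
             qH q (m + 1) (B (q ^ (k + 1) * t) ω) (q ^ (k + 1) * t)))
          atTop (nhds (J m ω))) ∧
        Tendsto (fun N : ℕ => ∫ ω,
            (∑ k ∈ Finset.range N, b m (q ^ k * t) *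
              (qH q (m + 1) (B (q ^ k * t) ω) (q ^ k * t) -
               qH q (m + 1) (B (q ^ (k + 1) * t) ω) (q ^ (k + 1) * t)) - J m ω) ^ 2 ∂μ)
          atTop (nhds 0)) ∧
      ∃ S : Ω → ℝ,
        Tendsto (fun N : ℕ => ∫ ω,
            (∑ m ∈ Finset.range (N + 1), (1 / qFact q (m + 1)) * J m ω - S ω) ^ 2 ∂μ)
          atTop (nhds 0) := by
  classical
  choose M hM using hb
  have hr0 : (0:ℝ) ≤ Real.sqrt q := Real.sqrt_nonneg q
  have hr1 : Real.sqrt q < 1 := by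
    rw [← Real.sqrt_one]; exact Real.sqrt_lt_sqrt hq0.le hq1
  set r : ℝ := Real.sqrt q with hrdef
  have hr1' : (0:ℝ) < 1 - r := by linarith
  set K : ℕ → ℝ := fun m => M m * (2 * qHc q (m+1) * Real.sqrt t ^ (m+1)) with hKdef
  set J : ℕ → Ω → ℝ := fun m ω => ∑' k, Dterm q t B b m k ω with hJdef
  have hDb : ∀ m, ∀ᵐ ω ∂μ, ∀ k : ℕ, |Dterm q t B b m k ω| ≤ K m * r ^ k :=
    fun m => Dterm_bound hq0 hq1 ht hbdd b m (hM m)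
  have hsummae : ∀ m, ∀ᵐ ω ∂μ, Summable (fun k => Dterm q t B b m k ω) := fun m =>
    (hDb m).mono fun ω h => Summable.of_abs
      (Summable.of_nonneg_of_le (fun k => abs_nonneg _) h (geo_summable hq0 hq1 _))
  have parta : ∀ m, ∀ᵐ ω ∂μ, Tendsto (fun N => DS q t B b m N ω) atTop (𝓝 (J m ω)) :=
    fun m => (hsummae m).mono fun ω h => h.hasSum.tendsto_sum_nat
  have hJaesm : ∀ m, AEStronglyMeasurable (J m) μ := fun m =>
    aestronglyMeasurable_of_tendsto_ae atTop (fun N => DS_aesm (q := q) (t := t) hadp b m N) (parta m)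
  have htail : ∀ m, ∀ᵐ ω ∂μ, ∀ N, |DS q t B b m N ω - J m ω| ≤ (K m * (1 - r)⁻¹) * r ^ N :=
    fun m => (hDb m).mono fun ω h N => D_tail hq0 hq1 h N
  have hDSb : ∀ m, ∀ᵐ ω ∂μ, ∀ N, |DS q t B b m N ω| ≤ K m * (1 - r)⁻¹ := by
    intro m
    filter_upwards [hDb m] with ω h N
    have h0 : 0 ≤ K m := by have := (abs_nonneg _).trans (h 0); simpa using this
    calc |DS q t B b m N ω| ≤ ∑ k ∈ Finset.range N, |Dterm q t B b m k ω| :=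
          Finset.abs_sum_le_sum_abs _ _
      _ ≤ ∑ k ∈ Finset.range N, K m * r ^ k :=
          Finset.sum_le_sum fun k _ => h k
      _ ≤ ∑' k : ℕ, K m * r ^ k :=
          Summable.sum_le_tsum _ (fun k _ => by positivity) (geo_summable hq0 hq1 _)
      _ = K m * (1 - r)⁻¹ := by
          rw [tsum_mul_left, tsum_geometric_of_lt_one hr0 hr1]
  have hJb : ∀ m, ∀ᵐ ω ∂μ, |J m ω| ≤ K m * (1 - r)⁻¹ := by
    intro m
    filter_upwards [htail m] with ω h
    have := h 0
    simpa [DS] using this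
  refine ⟨J, fun m => ⟨parta m, ?_⟩, ?_⟩
  · -- L² convergence for fixed m
    show Tendsto (fun N : ℕ => ∫ ω, (DS q t B b m N ω - J m ω) ^ 2 ∂μ) atTop (𝓝 0)
    have hmeas : ∀ N, AEStronglyMeasurable (fun ω => (DS q t B b m N ω - J m ω) ^ 2) μ := by
      intro N
      have := ((DS_aesm (q := q) (t := t) hadp b m N).sub (hJaesm m)).mul ((DS_aesm (q := q) (t := t) hadp b m N).sub (hJaesm m))
      simpa [pow_two, Pi.mul_def, Pi.sub_def] using this
    have hEb : ∀ N, ∫ ω, (DS q t B b m N ω - J m ω) ^ 2 ∂μ ≤ ((K m * (1 - r)⁻¹) * r ^ N) ^ 2 := by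
      intro N
      have hb2 : ∀ᵐ ω ∂μ, (DS q t B b m N ω - J m ω) ^ 2 ≤ ((K m * (1 - r)⁻¹) * r ^ N) ^ 2 :=
        (htail m).mono fun ω h => by
          rw [← sq_abs]; exact pow_le_pow_left₀ (abs_nonneg _) (h N) 2
      have hint : Integrable (fun ω => (DS q t B b m N ω - J m ω) ^ 2) μ :=
        integrable_of_abs_le (hmeas N)
          (hb2.mono fun ω h => by rwa [abs_of_nonneg (sq_nonneg _)])
      calc ∫ ω, (DS q t B b m N ω - J m ω) ^ 2 ∂μ
          ≤ ∫ _ω, ((K m * (1 - r)⁻¹) * r ^ N) ^ 2 ∂μ :=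
            integral_mono_ae hint (integrable_const _) hb2
        _ = ((K m * (1 - r)⁻¹) * r ^ N) ^ 2 := by simp
    have hge : ∀ N, 0 ≤ ∫ ω, (DS q t B b m N ω - J m ω) ^ 2 ∂μ :=
      fun N => integral_nonneg fun ω => sq_nonneg _
    have hlim0 : Tendsto (fun N : ℕ => (K m * (1 - r)⁻¹) * r ^ N) atTop (𝓝 0) := by
      have := (tendsto_pow_atTop_nhds_zero_of_lt_one hr0 hr1).const_mul (K m * (1 - r)⁻¹)
      simpa using this
    have hlim : Tendsto (fun N : ℕ => ((K m * (1 - r)⁻¹) * r ^ N) ^ 2) atTop (𝓝 0) := by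
      have := hlim0.mul hlim0
      simpa [pow_two] using this
    exact tendsto_of_tendsto_of_tendsto_of_le_of_le tendsto_const_nhds hlim hge hEb
  · -- global L² convergence
    have hJJ : ∀ m n, Tendsto (fun N => ∫ ω, DS q t B b m N ω * DS q t B b n N ω ∂μ)
        atTop (𝓝 (∫ ω, J m ω * J n ω ∂μ)) := by
      intro m n
      refine tendsto_integral_of_dominated_convergence
        (fun _ => (K m * (1 - r)⁻¹) * (K n * (1 - r)⁻¹))
        (fun N => (DS_aesm (q := q) (t := t) hadp b m N).mul (DS_aesm (q := q) (t := t) hadp b n N))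
        (integrable_const _) ?_ ?_
      · intro N
        filter_upwards [hDSb m, hDSb n] with ω h1 h2
        rw [Real.norm_eq_abs, abs_mul]
        exact mul_le_mul (h1 N) (h2 N) (abs_nonneg _) ((abs_nonneg _).trans (h1 N))
      · filter_upwards [parta m, parta n] with ω h1 h2
        exact h1.mul h2
    have hJJ0 : ∀ m n, m ≠ n → ∫ ω, J m ω * J n ω ∂μ = 0 := by
      intro m n hmn
      have h := hJJ m n
      rw [show (fun N => ∫ ω, DS q t B b m N ω * DS q t B b n N ω ∂μ) = fun _ => (0:ℝ) from
        funext fun N => by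
          rw [SS_moment hq0 hq1 ht hadp hbdd hmart horth b m n N, if_neg hmn]] at h
      exact tendsto_nhds_unique h tendsto_const_nhds
    have hJsq : ∀ m, Tendsto (fun N => ∑ k ∈ Finset.range N, (b m (q ^ k * t)) ^ 2 *
        qFact q (m + 1) * ((q ^ k * t) ^ (m + 1) - (q ^ (k + 1) * t) ^ (m + 1)))
        atTop (𝓝 (∫ ω, J m ω * J m ω ∂μ)) := by
      intro m
      have h := hJJ m m
      rwa [show (fun N => ∫ ω, DS q t B b m N ω * DS q t B b m N ω ∂μ)
          = fun N => ∑ k ∈ Finset.range N, (b m (q ^ k * t)) ^ 2 *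
            qFact q (m + 1) * ((q ^ k * t) ^ (m + 1) - (q ^ (k + 1) * t) ^ (m + 1)) from
        funext fun N => by
          rw [SS_moment hq0 hq1 ht hadp hbdd hmart horth b m m N, if_pos rfl]] at h
    set a : ℕ → ℝ := fun m => 1 / qFact q (m+1) with hadef
    set C : ℕ → ℝ := fun m => a m ^ 2 * ∫ ω, J m ω * J m ω ∂μ with hCdef
    have hCH : ∀ m, C m ≤ (1 / qFact q m) *
        ((1 - q) * t * ∑' k : ℕ, q ^ k * (b m (q ^ k * t)) ^ 2 * (q ^ k * t) ^ m) := by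
      intro m
      have h := (hJsq m).const_mul (a m ^ 2)
      exact le_of_tendsto h (Eventually.of_forall fun N =>
        partial_bound hq0 hq1 ht b m (hM m) N)
    have hC0 : ∀ m, 0 ≤ C m := fun m =>
      mul_nonneg (sq_nonneg _) (integral_nonneg fun ω => mul_self_nonneg _)
    have hCsum : Summable C := Summable.of_nonneg_of_le hC0 hCH hsum
    -- move to L²
    have hmem : ∀ m, MemLp (J m) 2 μ := fun m =>
      MemLp.of_bound (hJaesm m) (K m * (1 - r)⁻¹)
        ((hJb m).mono fun ω h => by rwa [Real.norm_eq_abs])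
    set Jlp : ℕ → Lp ℝ 2 μ := fun m => (hmem m).toLp (J m) with hJlpdef
    have hinner : ∀ m n, (inner ℝ (Jlp m) (Jlp n) : ℝ) = ∫ ω, J m ω * J n ω ∂μ := by
      intro m n
      rw [L2.inner_def]
      refine integral_congr_ae ?_
      filter_upwards [(hmem m).coeFn_toLp, (hmem n).coeFn_toLp] with ω h1 h2
      simp [RCLike.inner_apply, conj_trivial, hJlpdef, h1, h2, mul_comm]
    have hnorm : ∀ m, ‖a m • Jlp m‖ ^ 2 = C m := by
      intro m
      rw [norm_smul, mul_pow, Real.norm_eq_abs, sq_abs, ← real_inner_self_eq_norm_sq,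
        hinner]
    set P : ℕ → Lp ℝ 2 μ := fun N => ∑ m ∈ Finset.range (N+1), a m • Jlp m with hPdef
    have hdist : ∀ N N', N ≤ N' → dist (P N) (P N') ^ 2
        = ∑ m ∈ Finset.Ico (N+1) (N'+1), C m := by
      intro N N' h
      have hsub : P N' - P N = ∑ m ∈ Finset.Ico (N+1) (N'+1), a m • Jlp m := by
        rw [Finset.sum_Ico_eq_sub _ (by omega : N+1 ≤ N'+1)]
      rw [dist_eq_norm, norm_sub_rev, hsub, norm_sq_sum_orth]
      · exact Finset.sum_congr rfl fun m _ => hnorm m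
      · intro i _ j _ hij
        rw [real_inner_smul_left, real_inner_smul_right, hinner, hJJ0 i j hij]
        ring
    have hP : CauchySeq P := by
      rw [Metric.cauchySeq_iff]
      intro ε hε
      have hV : CauchySeq (fun N => ∑ m ∈ Finset.range N, C m) :=
        hCsum.hasSum.tendsto_sum_nat.cauchySeq
      rw [Metric.cauchySeq_iff] at hV
      obtain ⟨I, hI⟩ := hV (ε ^ 2) (by positivity)
      refine ⟨I, fun N1 h1 N2 h2 => ?_⟩
      wlog hle : N2 ≤ N1 generalizing N1 N2
      · rw [dist_comm]; exact this N2 h2 N1 h1 (by omega)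
      have hd2 : dist (P N2) (P N1) ^ 2 = ∑ m ∈ Finset.Ico (N2+1) (N1+1), C m :=
        hdist N2 N1 hle
      have hsum2 : ∑ m ∈ Finset.Ico (N2+1) (N1+1), C m
          = (∑ m ∈ Finset.range (N1+1), C m) - ∑ m ∈ Finset.range (N2+1), C m :=
        Finset.sum_Ico_eq_sub _ (by omega)
      have hlt : dist (P N2) (P N1) ^ 2 < ε ^ 2 := by
        rw [hd2, hsum2]
        calc (∑ m ∈ Finset.range (N1+1), C m) - ∑ m ∈ Finset.range (N2+1), C m
            ≤ |(∑ m ∈ Finset.range (N1+1), C m) - ∑ m ∈ Finset.range (N2+1), C m| :=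
              le_abs_self _
          _ = dist (∑ m ∈ Finset.range (N1+1), C m) (∑ m ∈ Finset.range (N2+1), C m) :=
              (Real.dist_eq _ _).symm
          _ < ε ^ 2 := hI (N1+1) (by omega) (N2+1) (by omega)
      rw [dist_comm]
      exact lt_of_pow_lt_pow_left₀ 2 hε.le hlt
    obtain ⟨PL, hPL⟩ := cauchySeq_tendsto_of_complete hP
    refine ⟨⇑PL, ?_⟩
    have hcoe : ∀ N, (⇑(P N) : Ω → ℝ) =ᵐ[μ] fun ω => ∑ m ∈ Finset.range (N+1), a m * J m ω := by
      intro N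
      have h1 := coeFn_finset_sum (μ := μ) (Finset.range (N+1)) (fun m => a m • Jlp m)
      have h2 : ∀ m, (⇑(a m • Jlp m) : Ω → ℝ) =ᵐ[μ] fun ω => a m * J m ω := by
        intro m
        filter_upwards [Lp.coeFn_smul (a m) (Jlp m), (hmem m).coeFn_toLp] with ω e1 e2
        simp [e1, e2, smul_eq_mul]
        exact Or.inl e2
      have h3 : ∀ᵐ ω ∂μ, ∀ m : ℕ, (⇑(a m • Jlp m)) ω = a m * J m ω :=
        ae_all_iff.2 h2
      filter_upwards [h1, h3] with ω e1 e3
      rw [e1]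
      exact Finset.sum_congr rfl fun m _ => e3 m
    have hfinal : ∀ N, ∫ ω, (∑ m ∈ Finset.range (N+1), a m * J m ω - PL ω) ^ 2 ∂μ
        = ‖P N - PL‖ ^ 2 := by
      intro N
      have h1 : (fun ω => ∑ m ∈ Finset.range (N+1), a m * J m ω - PL ω)
          =ᵐ[μ] ⇑(P N - PL) := by
        filter_upwards [hcoe N, Lp.coeFn_sub (P N) PL] with ω e1 e2
        rw [e2, Pi.sub_apply, e1]
      have h2 : ∫ ω, (∑ m ∈ Finset.range (N+1), a m * J m ω - PL ω) ^ 2 ∂μ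
          = ∫ ω, ((P N - PL : Lp ℝ 2 μ) ω) ^ 2 ∂μ :=
        integral_congr_ae (h1.mono fun ω h => congrArg (fun z : ℝ => z ^ 2) h)
      rw [h2, ← real_inner_self_eq_norm_sq, L2.inner_def]
      refine integral_congr_ae (Eventually.of_forall fun ω => ?_)
      simp [RCLike.inner_apply, conj_trivial, pow_two]
    have hnt : Tendsto (fun N => ‖P N - PL‖ ^ 2) atTop (𝓝 0) := by
      have hd : Tendsto (fun N => dist (P N) PL) atTop (𝓝 0) :=
        tendsto_iff_dist_tendsto_zero.mp hPL
      have := hd.mul hd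
      simp only [mul_zero] at this
      have heq : (fun N => ‖P N - PL‖ ^ 2) = fun N => dist (P N) PL * dist (P N) PL :=
        funext fun N => by rw [dist_eq_norm, pow_two]
      rw [heq]
      exact this
    have heqfun : (fun N : ℕ => ∫ ω, (∑ m ∈ Finset.range (N + 1), a m * J m ω - PL ω) ^ 2 ∂μ)
        = fun N => ‖P N - PL‖ ^ 2 := funext hfinal
    show Tendsto (fun N : ℕ => ∫ ω,
        (∑ m ∈ Finset.range (N + 1), a m * J m ω - PL ω) ^ 2 ∂μ) atTop (𝓝 0)
    rw [heqfun]
    exact hnt
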